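/- Let 0 < p_l < ε < p ≤ 1. For every feasible prior μ, the posterior confidence satisfies P(μ,p) ≥ (m·θ)/(m·θ + M·(1−θ)), where m is the minimum of f over [p_l, ε] and M is the maximum of f over [p, 1]. -/

import Mathlib

open MeasureTheory Set

/-- The Bernoulli likelihood of observing `k` failures in `n` trials. -/
noncomputable def likelihood (k n : ℕ) (x : ℝ) : ℝ := x ^ k * (1 - x) ^ (n - k)

/-- A prior (probability measure on `[0,1]`) is feasible if it assigns mass `θ`
to `[0, ε]` and full mass to `[p_l, 1]`. -/
def Feasible (pl ε θ : ℝ) (μ : Measure ℝ) : Prop :=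
  IsProbabilityMeasure μ ∧ μ (Icc 0 ε) = ENNReal.ofReal θ ∧ μ (Icc pl 1) = 1

/-- The posterior confidence `P(μ, p)` in the bound `p` after observing
`k` failures in `n` miles, with prior `μ`. -/
noncomputable def posterior (k n : ℕ) (μ : Measure ℝ) (p : ℝ) : ℝ :=
  (∫ x in Icc (0 : ℝ) p, likelihood k n x ∂μ) /
    (∫ x in Icc (0 : ℝ) 1, likelihood k n x ∂μ)

theorem stmt_0 (k n : ℕ) (hkn : k ≤ n) (pl ε θ p : ℝ)
    (hpl : 0 < pl) (hple : pl < ε) (hεp : ε < p) (hp1 : p ≤ 1)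
    (hθ0 : 0 < θ) (hθ1 : θ ≤ 1) (m M : ℝ)
    (hm : IsLeast (likelihood k n '' Icc pl ε) m)
    (hM : IsGreatest (likelihood k n '' Icc p 1) M)
    (μ : Measure ℝ) (hμ : Feasible pl ε θ μ) :
    m * θ / (m * θ + M * (1 - θ)) ≤ posterior k n μ p := by
  obtain ⟨hprob, hθmass, hfull⟩ := hμ
  have hε1 : ε < 1 := lt_of_lt_of_le hεp hp1
  have hp0 : 0 < p := lt_trans (lt_trans hpl hple) hεp
  have hcont : Continuous (likelihood k n) := by
    unfold likelihood; fun_prop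
  have hnonneg : ∀ x ∈ Icc (0:ℝ) 1, 0 ≤ likelihood k n x := fun x hx =>
    mul_nonneg (pow_nonneg hx.1 _) (pow_nonneg (by linarith [hx.2]) _)
  have hm_pos : 0 < m := by
    obtain ⟨x, hx, hfx⟩ := hm.1
    have hx0 : 0 < x := lt_of_lt_of_le hpl hx.1
    have hx1 : x < 1 := lt_of_le_of_lt hx.2 hε1
    have h : 0 < likelihood k n x :=
      mul_pos (pow_pos hx0 _) (pow_pos (by linarith) _)
    rw [hfx] at h; exact h
  have hM_nonneg : 0 ≤ M := by
    obtain ⟨x, hx, hfx⟩ := hM.1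
    have h := hnonneg x ⟨le_trans hp0.le hx.1, hx.2⟩
    rw [hfx] at h; exact h
  -- integrability
  have hint : ∀ a b : ℝ, IntegrableOn (likelihood k n) (Icc a b) μ :=
    fun a b => hcont.integrableOn_Icc
  have hintIoc : IntegrableOn (likelihood k n) (Ioc p 1) μ :=
    (hint p 1).mono_set Ioc_subset_Icc_self
  -- measure facts
  have hcompl : μ (Icc pl 1)ᶜ = 0 := by
    rw [measure_compl measurableSet_Icc (measure_ne_top μ _), hfull, measure_univ,
      tsub_self]
  have hIccplε : μ (Icc pl ε) = ENNReal.ofReal θ := by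
    have hsplit := measure_inter_add_diff (μ := μ) (Icc (0:ℝ) ε) (measurableSet_Icc (a := pl) (b := 1))
    have hdiff : μ (Icc (0:ℝ) ε \ Icc pl 1) = 0 :=
      le_antisymm (le_trans (measure_mono (diff_subset_compl _ _)) hcompl.le) zero_le
    have hinter : Icc (0:ℝ) ε ∩ Icc pl 1 = Icc pl ε := by
      rw [Icc_inter_Icc, max_eq_right hpl.le, min_eq_left hε1.le]
    rw [hinter, hdiff, add_zero] at hsplit
    rw [hsplit, hθmass]
  have hθtoReal : (μ (Icc pl ε)).toReal = θ := by
    rw [hIccplε, ENNReal.toReal_ofReal hθ0.le]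
  have hIocle : (μ (Ioc p 1)).toReal ≤ 1 - θ := by
    have hdisj : Disjoint (Icc (0:ℝ) ε) (Ioc p 1) := by
      apply Set.disjoint_left.2
      intro x hx hx'
      exact absurd hx.2 (not_le.2 (lt_trans hεp hx'.1))
    have hunion : μ (Icc (0:ℝ) ε) + μ (Ioc p 1) ≤ 1 := by
      rw [← measure_union hdisj measurableSet_Ioc]
      exact prob_le_one
    have h1 : (μ (Icc (0:ℝ) ε)).toReal + (μ (Ioc p 1)).toReal ≤ 1 := by
      rw [← ENNReal.toReal_add (measure_ne_top μ _) (measure_ne_top μ _)]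
      simpa using ENNReal.toReal_mono ENNReal.one_ne_top hunion
    have h2 : (μ (Icc (0:ℝ) ε)).toReal = θ := by
      rw [hθmass, ENNReal.toReal_ofReal hθ0.le]
    linarith
  -- integral bounds
  set A := ∫ x in Icc (0:ℝ) p, likelihood k n x ∂μ with hA_def
  set C := ∫ x in Ioc p 1, likelihood k n x ∂μ with hC_def
  have hnonnegp : 0 ≤ᵐ[μ.restrict (Icc (0:ℝ) p)] likelihood k n := by
    filter_upwards [ae_restrict_mem measurableSet_Icc] with x hx
    exact hnonneg x ⟨hx.1, le_trans hx.2 hp1⟩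
  have hA_ge : m * θ ≤ A := by
    have step1 : ∫ x in Icc pl ε, likelihood k n x ∂μ ≤ A :=
      setIntegral_mono_set (hint 0 p) hnonnegp
        (HasSubset.Subset.eventuallyLE (Icc_subset_Icc (by linarith) (by linarith)))
    have step2 : m * (μ (Icc pl ε)).toReal ≤ ∫ x in Icc pl ε, likelihood k n x ∂μ := by
      apply setIntegral_ge_of_const_le_real measurableSet_Icc (measure_ne_top μ _)
      · intro x hx
        exact hm.2 ⟨x, hx, rfl⟩
      · exact (hint pl ε).mono_set (Icc_subset_Icc (by linarith) (by linarith)) |>.mono_set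
          (subset_refl _)
    rw [hθtoReal] at step2
    linarith
  have hC_nonneg : 0 ≤ C := by
    apply setIntegral_nonneg measurableSet_Ioc
    intro x hx
    exact hnonneg x ⟨le_trans hp0.le hx.1.le, hx.2⟩
  have hC_le : C ≤ M * (1 - θ) := by
    have step1 : C ≤ ∫ _x in Ioc p 1, M ∂μ := by
      apply setIntegral_mono_on hintIoc (integrableOn_const (measure_ne_top μ _))
        measurableSet_Ioc
      intro x hx
      exact hM.2 ⟨x, ⟨hx.1.le, hx.2⟩, rfl⟩
    rw [setIntegral_const] at step1
    calc C ≤ (μ (Ioc p 1)).toReal • M := step1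
      _ = M * (μ (Ioc p 1)).toReal := by rw [smul_eq_mul, mul_comm]
      _ ≤ M * (1 - θ) := mul_le_mul_of_nonneg_left hIocle hM_nonneg
  have hsplitB : (∫ x in Icc (0:ℝ) 1, likelihood k n x ∂μ) = A + C := by
    rw [hA_def, hC_def, ← setIntegral_union (by rw [Set.disjoint_left]; exact fun x hx hx' => absurd hx.2 (not_le.2 hx'.1)) measurableSet_Ioc
      (hint 0 p) hintIoc, Icc_union_Ioc_eq_Icc hp0.le hp1]
  -- final arithmetic
  rw [posterior, hsplitB]
  have hmθ : 0 < m * θ := mul_pos hm_pos hθ0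
  have hden1 : 0 < m * θ + M * (1 - θ) := by nlinarith
  have hden2 : 0 < A + C := by linarith
  rw [div_le_div_iff₀ hden1 hden2]
  nlinarith
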